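/- If Φ is continuously differentiable with Φ'(x) > 0 for all x, then the set of critical points of the Hopfield energy E coincides exactly with the set of equilibria of the Hopfield dynamics τẋ = -Dx + WΦ(x) + Bu with symmetric W. -/

import Mathlib

open Finset

/-- If `Φ` is `C¹` with `Φ' > 0` everywhere, then the critical points of the
Hopfield energy coincide exactly with the equilibria of the Hopfield dynamics
`τ ẋ = -Dx + WΦ(x) + Bu` with symmetric `W`. -/
theorem hopfield_critical_points_eq_equilibria {N M : ℕ}
    (τ : ℝ) (hτ : 0 < τ)
    (d : Fin N → ℝ) (hd : ∀ i, 0 < d i)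
    (W : Matrix (Fin N) (Fin N) ℝ) (hW : W.IsSymm)
    (B : Matrix (Fin N) (Fin M) ℝ) (u : Fin M → ℝ)
    (Φ : ℝ → ℝ) (hΦ : ContDiff ℝ 1 Φ) (hΦ' : ∀ s, 0 < deriv Φ s)
    (E : (Fin N → ℝ) → ℝ)
    (hE : ∀ v : Fin N → ℝ, E v =
      -(1 / 2) * (∑ i, ∑ j, Φ (v i) * W i j * Φ (v j))
        + (∑ i, (d i * v i - ∑ m, B i m * u m) * Φ (v i))
        - ∑ i, d i * ∫ w in (0:ℝ)..(v i), Φ w) :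
    ∀ x : Fin N → ℝ,
      fderiv ℝ E x = 0 ↔
      (∀ i, -(d i * x i) + (∑ j, W i j * Φ (x j)) + (∑ m, B i m * u m) = 0) := by
  have hEfun : E = fun v => -(1 / 2) * (∑ i, ∑ j, Φ (v i) * W i j * Φ (v j))
        + (∑ i, (d i * v i - ∑ m, B i m * u m) * Φ (v i))
        - ∑ i, d i * ∫ w in (0:ℝ)..(v i), Φ w := funext hE
  subst hEfun
  have hΦc : Continuous Φ := hΦ.continuous
  have hΦd : ∀ t, HasDerivAt Φ (deriv Φ t) t := fun t =>
    (hΦ.differentiable one_ne_zero t).hasDerivAt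
  intro x
  set P : Fin N → (Fin N → ℝ) →L[ℝ] ℝ :=
    fun i => ContinuousLinearMap.proj i with hPdef
  have hΦi : ∀ i, HasFDerivAt (fun v : Fin N → ℝ => Φ (v i))
      (deriv Φ (x i) • P i) x :=
    fun i => (hΦd (x i)).comp_hasFDerivAt x (P i).hasFDerivAt
  have hFi : ∀ i, HasFDerivAt (fun v : Fin N → ℝ => ∫ w in (0:ℝ)..(v i), Φ w)
      (Φ (x i) • P i) x :=
    fun i => by
      have := ((hΦc.integral_hasStrictDerivAt 0 (x i)).hasDerivAt).comp_hasFDerivAt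
        x (P i).hasFDerivAt
      exact this
  have hA : HasFDerivAt
      (fun v : Fin N → ℝ => ∑ i, ∑ j, Φ (v i) * W i j * Φ (v j))
      (∑ i, ∑ j, ((Φ (x i) * W i j) • (deriv Φ (x j) • P j)
        + Φ (x j) • (W i j • (deriv Φ (x i) • P i)))) x := by
    apply HasFDerivAt.fun_sum
    intro i _
    apply HasFDerivAt.fun_sum
    intro j _
    exact ((hΦi i).mul_const (W i j)).mul (hΦi j)
  have hB : HasFDerivAt
      (fun v : Fin N → ℝ => ∑ i, (d i * v i - ∑ m, B i m * u m) * Φ (v i))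
      (∑ i, ((d i * x i - ∑ m, B i m * u m) • (deriv Φ (x i) • P i)
        + Φ (x i) • (d i • P i))) x := by
    apply HasFDerivAt.fun_sum
    intro i _
    exact (((P i).hasFDerivAt.const_mul (d i)).sub_const _).mul (hΦi i)
  have hC : HasFDerivAt
      (fun v : Fin N → ℝ => ∑ i, d i * ∫ w in (0:ℝ)..(v i), Φ w)
      (∑ i, d i • (Φ (x i) • P i)) x := by
    apply HasFDerivAt.fun_sum
    intro i _
    exact (hFi i).const_mul (d i)
  set L : (Fin N → ℝ) →L[ℝ] ℝ :=
    (-(1 / 2) : ℝ) • (∑ i, ∑ j, ((Φ (x i) * W i j) • (deriv Φ (x j) • P j)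
        + Φ (x j) • (W i j • (deriv Φ (x i) • P i))))
      + (∑ i, ((d i * x i - ∑ m, B i m * u m) • (deriv Φ (x i) • P i)
        + Φ (x i) • (d i • P i)))
      - (∑ i, d i • (Φ (x i) • P i)) with hLdef
  have hL : HasFDerivAt
      (fun v : Fin N → ℝ => -(1 / 2) * (∑ i, ∑ j, Φ (v i) * W i j * Φ (v j))
        + (∑ i, (d i * v i - ∑ m, B i m * u m) * Φ (v i))
        - ∑ i, d i * ∫ w in (0:ℝ)..(v i), Φ w) L x :=
    ((hA.const_mul (-(1 / 2))).add hB).sub hC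
  have hfd := hL.fderiv
  rw [hfd]
  have hval : ∀ k, L (Pi.single k 1) =
      -(deriv Φ (x k)) * (-(d k * x k) + (∑ j, W k j * Φ (x j))
        + ∑ m, B k m * u m) := by
    intro k
    have hPapp : ∀ i, P i (Pi.single k (1:ℝ)) = if i = k then 1 else 0 := by
      intro i
      simp [hPdef, Pi.single_apply]
    have hsym : ∀ i j, W i j = W j i := fun i j => (hW.apply j i)
    simp only [hLdef, ContinuousLinearMap.add_apply, ContinuousLinearMap.sub_apply,
      ContinuousLinearMap.smul_apply, ContinuousLinearMap.sum_apply, hPapp,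
      smul_eq_mul, mul_ite, mul_one, mul_zero, ite_mul, zero_mul,
      Finset.sum_add_distrib, Finset.sum_ite_eq', Finset.mem_univ, if_true,
      Finset.sum_ite_irrel, Finset.sum_const_zero]
    have h1 : (∑ i, Φ (x i) * W i k * deriv Φ (x k))
        = deriv Φ (x k) * ∑ j, W k j * Φ (x j) := by
      rw [Finset.mul_sum]
      exact Finset.sum_congr rfl fun i _ => by rw [hsym i k]; ring
    have h2 : (∑ i, Φ (x i) * (W k i * deriv Φ (x k)))
        = deriv Φ (x k) * ∑ j, W k j * Φ (x j) := by
      rw [Finset.mul_sum]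
      exact Finset.sum_congr rfl fun i _ => by ring
    rw [h1, h2]
    ring
  constructor
  · intro h0 k
    have := hval k
    rw [h0] at this
    simp only [ContinuousLinearMap.zero_apply] at this
    have hne : deriv Φ (x k) ≠ 0 := ne_of_gt (hΦ' (x k))
    have := this.symm
    rcases mul_eq_zero.mp this with h | h
    · exact absurd (neg_eq_zero.mp h) hne
    · exact h
  · intro heq
    ext v
    have hv : v = ∑ k, (v k) • (Pi.single k (1:ℝ) : Fin N → ℝ) := by
      funext j
      simp [Pi.single_apply, Finset.sum_apply]
    rw [hv]
    simp only [map_sum, map_smul, ContinuousLinearMap.zero_apply]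
    refine Finset.sum_congr rfl ?_
    intro k _
    rw [hval k, heq k]
    simp
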